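/- Let m be a Borel measure on ℝⁿ that is finite on compact sets. For any ν ∈ P₁(ℝⁿ), the supremum defining K(ν|m) can be restricted to convex Lipschitz functions: K(ν|m) = sup over convex Lipschitz f : ℝⁿ → ℝ of {∫ (−f) dν + log ∫ e^{−f*} dm}. -/

import Mathlib

open MeasureTheory Real Filter Set
attribute [local instance] Classical.propDecidable
open scoped ENNReal NNReal Topology

noncomputable section

/-- `ℝⁿ` as a Euclidean space. -/
abbrev En (n : ℕ) : Type := EuclideanSpace ℝ (Fin n)

/-- `exp(-t)` for an extended real `t`, valued in `ℝ≥0∞`. -/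
def expNeg (t : EReal) : ℝ≥0∞ :=
  if t = ⊥ then ⊤ else if t = ⊤ then 0 else ENNReal.ofReal (Real.exp (-t.toReal))

/-- Convexity for `EReal`-valued functions on `ℝⁿ`. -/
def ConvexE {n : ℕ} (f : En n → EReal) : Prop :=
  ∀ x y : En n, ∀ t : ℝ, 0 ≤ t → t ≤ 1 →
    f (t • x + (1 - t) • y) ≤ (t : EReal) * f x + ((1 - t : ℝ) : EReal) * f y

/-- The class `F(ℝⁿ)`: proper lower semicontinuous convex functions `ℝⁿ → ℝ ∪ {+∞}`. -/
def IsF {n : ℕ} (f : En n → EReal) : Prop :=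
  LowerSemicontinuous f ∧ ConvexE f ∧ (∃ x, f x ≠ ⊤) ∧ (∀ x, f x ≠ ⊥)

/-- Fenchel–Legendre transform. -/
def legendre {n : ℕ} (f : En n → EReal) : En n → EReal :=
  fun y => ⨆ x : En n, ((inner ℝ x y : ℝ) : EReal) - f x

/-- `∫ e^{-f} dm`, valued in `ℝ≥0∞`. -/
def intExpNeg {n : ℕ} (m : Measure (En n)) (f : En n → EReal) : ℝ≥0∞ :=
  ∫⁻ x, expNeg (f x) ∂m

/-- Extended-real logarithm of an `ℝ≥0∞` number. -/
def elog (x : ℝ≥0∞) : EReal :=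
  if x = 0 then ⊥ else if x = ⊤ then ⊤ else ((Real.log x.toReal : ℝ) : EReal)

/-- Positive part of an extended real, as an element of `ℝ≥0∞`. -/
def posPart (x : EReal) : ℝ≥0∞ := if x = ⊤ then ⊤ else ENNReal.ofReal x.toReal

/-- Extended-valued integral `∫ f dμ := ∫ f⁺ dμ - ∫ f⁻ dμ`. -/
def eInt {n : ℕ} (μ : Measure (En n)) (f : En n → EReal) : EReal :=
  ((∫⁻ x, posPart (f x) ∂μ : ℝ≥0∞) : EReal) - ((∫⁻ x, posPart (-f x) ∂μ : ℝ≥0∞) : EReal)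

/-- Probability measures with finite first moment. -/
def MemP1 {n : ℕ} (ν : Measure (En n)) : Prop :=
  IsProbabilityMeasure ν ∧ ∫⁻ x, (‖x‖₊ : ℝ≥0∞) ∂ν ≠ ⊤

/-- Probability measures with finite second moment. -/
def MemP2 {n : ℕ} (ν : Measure (En n)) : Prop :=
  IsProbabilityMeasure ν ∧ ∫⁻ x, (‖x‖₊ : ℝ≥0∞) ^ 2 ∂ν ≠ ⊤

/-- A measure is compactly supported. -/
def HasCompactSupportMeasure {n : ℕ} (ν : Measure (En n)) : Prop :=
  ∃ K : Set (En n), IsCompact K ∧ ν Kᶜ = 0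

/-- Coordinate sign flip of a point of `ℝⁿ`. -/
def signFlip {n : ℕ} (ε : Fin n → Bool) (x : En n) : En n :=
  (EuclideanSpace.equiv (Fin n) ℝ).symm (fun i => if ε i then x i else -x i)

/-- Unconditional function. -/
def UncondFun {n : ℕ} (f : En n → EReal) : Prop := ∀ ε x, f (signFlip ε x) = f x

/-- Symmetric function. -/
def SymmFun {n : ℕ} (f : En n → EReal) : Prop := ∀ x, f (-x) = f x

/-- Unconditional measure. -/
def UncondMeas {n : ℕ} (ν : Measure (En n)) : Prop := ∀ ε, Measure.map (signFlip ε) ν = ν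

/-- Symmetric measure. -/
def SymmMeas {n : ℕ} (ν : Measure (En n)) : Prop := Measure.map (fun x => -x) ν = ν

/-- The functional `K(ν|m) = sup { ∫(-f) dν + log ∫ e^{-f*} dm : f ∈ L¹(ν) ∩ F(ℝⁿ) }`. -/
def Kfun {n : ℕ} (ν m : Measure (En n)) : EReal :=
  ⨆ (f : En n → EReal) (_ : IsF f ∧ (∀ᵐ x ∂ν, f x ≠ ⊤) ∧
      Integrable (fun x => (f x).toReal) ν),
    ((-(∫ x, (f x).toReal ∂ν) : ℝ) : EReal) + elog (intExpNeg m (legendre f))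

/-- Maximal correlation transport cost `T(ν₁, ν₂)`. -/
def Tcost {n : ℕ} (ν₁ ν₂ : Measure (En n)) : EReal :=
  ⨅ (f : En n → EReal) (_ : IsF f), eInt ν₁ f + eInt ν₂ (legendre f)

/-- Relative entropy `H(η|m)`, equal to `+∞` when `η` is not absolutely continuous w.r.t. `m`. -/
def relEnt {n : ℕ} (η m : Measure (En n)) : EReal :=
  if η ≪ m then eInt η (fun x => ((Real.log (η.rnDeriv m x).toReal : ℝ) : EReal)) else ⊤

/-- The standard Gaussian measure on `ℝⁿ`. -/
def stdGaussian (n : ℕ) : Measure (En n) :=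
  volume.withDensity fun x =>
    ENNReal.ofReal ((2 * Real.pi) ^ (-(n : ℝ) / 2) * Real.exp (-‖x‖ ^ 2 / 2))

/-- Squared `2`-Wasserstein distance. -/
def W2sq {n : ℕ} (μ ν : Measure (En n)) : ℝ≥0∞ :=
  ⨅ (p : Measure (En n × En n)) (_ : p.map Prod.fst = μ ∧ p.map Prod.snd = ν),
    ∫⁻ q, (‖q.1 - q.2‖₊ : ℝ≥0∞) ^ 2 ∂p

/-- Absolute continuity of `g : ℝ → ℝ` on `[a, b]` (FTC characterization). -/
def ACOn (g : ℝ → ℝ) (a b : ℝ) : Prop :=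
  IntegrableOn (deriv g) (Set.Icc a b) ∧
    ∀ x ∈ Set.Icc a b, g x - g a = ∫ t in a..x, deriv g t

/-- The point of `ℝⁿ` obtained by replacing the `i`-th coordinate of `x` by `t`. -/
def updCoord {n : ℕ} (x : En n) (i : Fin n) (t : ℝ) : En n :=
  (EuclideanSpace.equiv (Fin n) ℝ).symm
    (Function.update ((EuclideanSpace.equiv (Fin n) ℝ) x) i t)

/-- Absolute continuity on almost every line parallel to a coordinate axis. -/
def ACL {n : ℕ} (g : En n → ℝ) : Prop :=
  ∀ i : Fin n, ∀ᵐ x ∂(volume : Measure (En n)),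
    ∀ a b : ℝ, ACOn (fun t => g (updCoord x i t)) a b

/-- Squared norm of the coordinate-wise a.e. gradient, via line derivatives. -/
def gradSq {n : ℕ} (g : En n → ℝ) (x : En n) : ℝ :=
  ∑ i : Fin n, (lineDeriv ℝ g x (EuclideanSpace.single i 1)) ^ 2

/-- Relative Fisher information `I(η|γ) = 4 ∫ |∇ √h|² dγ` where `h = dη/dγ`;
`+∞` unless `√h` is absolutely continuous on almost every line parallel to an axis. -/
def fisherInfo {n : ℕ} (η γ : Measure (En n)) : ℝ≥0∞ :=
  if η ≪ γ ∧ ACL (fun x => Real.sqrt (η.rnDeriv γ x).toReal) then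
    4 * ∫⁻ x, ENNReal.ofReal (gradSq (fun y => Real.sqrt (η.rnDeriv γ y).toReal) x) ∂γ
  else ⊤

/-- Deficit in the Gaussian logarithmic Sobolev inequality. -/
def lsDeficit {n : ℕ} (η : Measure (En n)) : EReal :=
  ((1 / 2 : ℝ) : EReal) * ((fisherInfo η (stdGaussian n) : ℝ≥0∞) : EReal)
    - relEnt η (stdGaussian n)

/-- Moment measure `∇V_# η` of a log-concave measure `η = e^{-V} dx`. -/
def momentMeasure {n : ℕ} (V : En n → EReal) (η : Measure (En n)) : Measure (En n) :=
  Measure.map (fun x => gradient (fun y => (V y).toReal) x) η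

/-- Essential continuity of a convex function. -/
def EssCont {n : ℕ} (V : En n → EReal) : Prop :=
  μH[(n : ℝ) - 1] {x : En n | x ∈ frontier {y | V y ≠ ⊤} ∧ V x ≠ ⊤} = 0

/-- The functional inverse Santaló inequality with constant `c`, restricted to a class `P`. -/
def InvSantaloOn {n : ℕ} (c : ℝ) (P : (En n → EReal) → Prop) : Prop :=
  ∀ f : En n → EReal, IsF f → P f →
    0 < intExpNeg volume f → 0 < intExpNeg volume (legendre f) →
    ENNReal.ofReal c ^ n ≤ intExpNeg volume f * intExpNeg volume (legendre f)

/-- The functional inverse Santaló inequality `IS_n(c)`. -/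
def InvSantalo (n : ℕ) (c : ℝ) : Prop := InvSantaloOn (n := n) c fun _ => True

/-- The symmetric functional inverse Santaló inequality `IS_{n,s}(c)`. -/
def InvSantaloSymm (n : ℕ) (c : ℝ) : Prop := InvSantaloOn (n := n) c SymmFun

/-- The unconditional functional inverse Santaló inequality `IS_{n,u}(c)`. -/
def InvSantaloUncond (n : ℕ) (c : ℝ) : Prop := InvSantaloOn (n := n) c UncondFun


/-! ### Auxiliary lemmas for Statement 5 -/

@[simp] lemma expNeg_coe_real (r : ℝ) : expNeg r = ENNReal.ofReal (Real.exp (-r)) := by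
  simp [expNeg]

lemma expNeg_antitone : Antitone expNeg := by
  intro a b hab
  rcases eq_or_ne a ⊥ with rfl | ha
  · simp [expNeg]
  rcases eq_or_ne b ⊤ with rfl | hb
  · simp [expNeg, le_top]
  have hb' : b ≠ ⊥ := fun h => ha (le_bot_iff.1 (h ▸ hab))
  have ha' : a ≠ ⊤ := fun h => hb (top_le_iff.1 (h ▸ hab))
  simp only [expNeg, if_neg ha, if_neg hb, if_neg ha', if_neg hb']
  exact ENNReal.ofReal_le_ofReal
    (Real.exp_le_exp.2 (neg_le_neg (EReal.toReal_le_toReal hab ha hb)))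

lemma measurable_expNeg : Measurable expNeg := by
  unfold expNeg
  refine Measurable.ite ?_ measurable_const (Measurable.ite ?_ measurable_const ?_)
  · show MeasurableSet {t : EReal | t = ⊥}
    simp [MeasurableSet.singleton (⊥ : EReal)]
  · show MeasurableSet {t : EReal | t = ⊤}
    simp [MeasurableSet.singleton (⊤ : EReal)]
  · exact (measurable_ereal_toReal.neg.exp).ennreal_ofReal

lemma elog_eq_log : elog = ENNReal.log := by
  ext x
  rcases eq_or_ne x 0 with rfl | h0
  · simp [elog, ENNReal.log]
  rcases eq_or_ne x ⊤ with rfl | htop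
  · simp [elog, ENNReal.log]
  · simp [elog, ENNReal.log, h0, htop]

/-- `ENNReal.log` as an order isomorphism. -/
def stmt5LogIso : ℝ≥0∞ ≃o EReal :=
  StrictMono.orderIsoOfSurjective _ ENNReal.log_strictMono ENNReal.log_surjective

lemma elog_iSup (A : ℕ → ℝ≥0∞) : elog (⨆ k, A k) = ⨆ k, elog (A k) := by
  rw [elog_eq_log]
  show stmt5LogIso _ = _
  rw [OrderIso.map_iSup]; rfl

lemma elog_mono : Monotone elog := by rw [elog_eq_log]; exact ENNReal.log_monotone

lemma legendre_lsc {n : ℕ} (f : En n → EReal) : LowerSemicontinuous (legendre f) := by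
  apply lowerSemicontinuous_iSup
  intro x
  rcases eq_or_ne (f x) ⊥ with hx | hx
  · have : (fun y : En n => ((inner ℝ x y : ℝ) : EReal) - f x) = fun _ => (⊤ : EReal) := by
      funext y; rw [hx]; exact EReal.coe_sub_bot _
    rw [this]; exact lowerSemicontinuous_const
  rcases eq_or_ne (f x) ⊤ with hx' | hx'
  · have : (fun y : En n => ((inner ℝ x y : ℝ) : EReal) - f x) = fun _ => (⊥ : EReal) := by
      funext y; rw [hx']; exact EReal.sub_top _
    rw [this]; exact lowerSemicontinuous_const
  · have : (fun y : En n => ((inner ℝ x y : ℝ) : EReal) - f x)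
        = fun y => (((inner ℝ x y : ℝ) - (f x).toReal : ℝ) : EReal) := by
      funext y; rw [EReal.coe_sub, EReal.coe_toReal hx' hx]
    rw [this]
    exact (continuous_coe_real_ereal.comp
      ((continuous_const.inner continuous_id).sub continuous_const)).lowerSemicontinuous

lemma legendre_measurable {n : ℕ} (f : En n → EReal) : Measurable (legendre f) :=
  (legendre_lsc f).measurable

lemma lipschitz_integrable {n : ℕ} {ν : Measure (En n)} (hν : MemP1 ν)
    {L : ℝ≥0} {g : En n → ℝ} (hg : LipschitzWith L g) : Integrable g ν := by
  haveI := hν.1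
  have hnorm : Integrable (fun x : En n => ‖x‖) ν := by
    refine ⟨(continuous_norm).aestronglyMeasurable, ?_⟩
    have h2 : (∫⁻ x, (‖(‖x‖ : ℝ)‖₊ : ℝ≥0∞) ∂ν) < ⊤ := by
      simpa [nnnorm_norm] using hν.2.lt_top
    exact h2
  have hmaj : Integrable (fun x : En n => ‖g 0‖ + L * ‖x‖) ν :=
    (integrable_const _).add (hnorm.const_mul _)
  refine hmaj.mono' hg.continuous.aestronglyMeasurable ?_
  filter_upwards with x
  have h1 : dist (g x) (g 0) ≤ L * dist x 0 := hg.dist_le_mul x 0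
  rw [Real.dist_eq, dist_zero_right] at h1
  rw [Real.norm_eq_abs, Real.norm_eq_abs]
  calc |g x| = |g 0 + (g x - g 0)| := by ring_nf
    _ ≤ |g 0| + |g x - g 0| := abs_add_le _ _
    _ ≤ |g 0| + L * ‖x‖ := by linarith

lemma ereal_add_orderIso (r : ℝ) : ∃ e : EReal ≃o EReal, ∀ t, e t = (r : EReal) + t := by
  have smono : StrictMono (fun t : EReal => (r : EReal) + t) := by
    intro a b hab
    simpa [add_comm] using EReal.add_lt_add_right_coe hab r
  have surj : Function.Surjective (fun t : EReal => (r : EReal) + t) := by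
    intro s
    induction s using EReal.rec with
    | bot => exact ⟨⊥, by simp⟩
    | coe s =>
        exact ⟨((s - r : ℝ) : EReal), by
          show (r : EReal) + ((s - r : ℝ) : EReal) = (s : EReal)
          rw [← EReal.coe_add]; norm_num⟩
    | top => exact ⟨⊤, by simp⟩
  exact ⟨StrictMono.orderIsoOfSurjective _ smono surj, fun t => rfl⟩

lemma ereal_add_iSup (r : ℝ) (h : ℕ → EReal) :
    (r : EReal) + ⨆ k, h k = ⨆ k, ((r : EReal) + h k) := by
  obtain ⟨e, he⟩ := ereal_add_orderIso r
  rw [← he, OrderIso.map_iSup]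
  simp only [he]

lemma exists_affine_minorant {n : ℕ} {f : En n → EReal} (hf : IsF f) :
    ∃ (c : En n →L[ℝ] ℝ) (d : ℝ), ∀ x, ((c x + d : ℝ) : EReal) ≤ f x := by
  obtain ⟨hlsc, hconv, ⟨x₀, hx₀⟩, hbot⟩ := hf
  set r : ℝ := (f x₀).toReal with hr
  have hfx₀ : f x₀ = (r : EReal) := (EReal.coe_toReal hx₀ (hbot x₀)).symm
  set epi : Set (En n × ℝ) := {p | f p.1 ≤ (p.2 : EReal)} with hepi
  have hclosed : IsClosed epi := by
    rw [← isOpen_compl_iff]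
    rw [isOpen_iff_mem_nhds]
    rintro ⟨x, s⟩ hp
    simp only [mem_compl_iff, hepi, mem_setOf_eq, not_le] at hp
    obtain ⟨c, hc1, hc2⟩ := EReal.exists_between_coe_real hp
    have hU : {y | (c : EReal) < f y} ∈ nhds x := hlsc x c hc2
    have : {y | (c : EReal) < f y} ×ˢ Iio c ∈ nhds (x, s) :=
      prod_mem_nhds hU (Iio_mem_nhds (by exact_mod_cast hc1))
    filter_upwards [this]
    rintro ⟨y, t⟩ ⟨hy, ht⟩
    simp only [mem_compl_iff, hepi, mem_setOf_eq, not_le]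
    exact lt_trans (by exact_mod_cast ht) hy
  have hconvex : Convex ℝ epi := by
    rintro ⟨x, s⟩ hx ⟨y, t⟩ hy a b ha hb hab
    simp only [hepi, mem_setOf_eq] at hx hy ⊢
    have hb' : b = 1 - a := by linarith
    calc f (a • x + b • y) = f (a • x + (1 - a) • y) := by rw [hb']
      _ ≤ (a : EReal) * f x + ((1 - a : ℝ) : EReal) * f y := hconv x y a ha (by linarith)
      _ ≤ (a : EReal) * (s : EReal) + ((1 - a : ℝ) : EReal) * (t : EReal) :=
          add_le_add (mul_le_mul_of_nonneg_left hx (EReal.coe_nonneg.2 ha))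
            (mul_le_mul_of_nonneg_left hy (EReal.coe_nonneg.2 (by linarith)))
      _ = ((a * s + b * t : ℝ) : EReal) := by
          rw [hb']; push_cast; ring_nf
  have hnotmem : ((x₀, r - 1) : En n × ℝ) ∉ epi := by
    simp only [hepi, mem_setOf_eq, not_le, hfx₀]
    exact_mod_cast sub_one_lt r
  obtain ⟨φ, u, hu1, hu2⟩ := geometric_hahn_banach_point_closed hconvex hclosed hnotmem
  set β : ℝ := φ (0, 1) with hβ
  have hdecomp : ∀ (x : En n) (s : ℝ), φ (x, s) = φ (x, 0) + s * β := by
    intro x s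
    have : ((x, s) : En n × ℝ) = (x, 0) + s • (0, 1) := by
      simp [Prod.ext_iff]
    rw [this, map_add, φ.map_smul]
    simp [smul_eq_mul]
    exact Or.inl rfl
  have hmem₀ : ((x₀, r) : En n × ℝ) ∈ epi := by
    simp only [hepi, mem_setOf_eq, hfx₀]; exact le_refl _
  have hβpos : 0 < β := by
    have h1 := hu2 _ hmem₀
    rw [hdecomp] at h1 hu1
    nlinarith
  refine ⟨(-(1/β)) • (φ.comp (ContinuousLinearMap.inl ℝ (En n) ℝ)), u / β, ?_⟩
  intro x
  rcases eq_or_ne (f x) ⊤ with hx | hx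
  · rw [hx]; exact le_top
  have hfx : f x = ((f x).toReal : EReal) := (EReal.coe_toReal hx (hbot x)).symm
  have hmem : ((x, (f x).toReal) : En n × ℝ) ∈ epi := by
    simp only [hepi, mem_setOf_eq]; exact le_of_eq hfx
  have h2 := hu2 _ hmem
  rw [hdecomp] at h2
  rw [hfx]
  apply EReal.coe_le_coe_iff.2
  simp only [ContinuousLinearMap.smul_apply, ContinuousLinearMap.comp_apply,
    ContinuousLinearMap.inl_apply, smul_eq_mul]
  have h3 : (u - φ (x, 0)) / β < (f x).toReal := by
    rw [div_lt_iff₀ hβpos]; linarith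
  have h4 : -(1/β) * φ (x, 0) + u / β = (u - φ (x, 0)) / β := by
    field_simp; ring
  rw [h4]; exact h3.le

lemma exists_lipschitz_approx {n : ℕ} {f : En n → EReal} (hf : IsF f)
    (c : En n →L[ℝ] ℝ) (d : ℝ) (hcd : ∀ x, ((c x + d : ℝ) : EReal) ≤ f x)
    (L : ℝ≥0) (hL : ‖c‖ ≤ (L : ℝ)) :
    ∃ g : En n → ℝ, ConvexOn ℝ univ g ∧ LipschitzWith L g ∧
      (∀ x, ((g x : ℝ) : EReal) ≤ f x) ∧
      (∀ y : En n, ‖y‖ ≤ (L : ℝ) → legendre (fun x => ((g x : ℝ) : EReal)) y ≤ legendre f y) := by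
  obtain ⟨hlsc, hconv, ⟨x₀, hx₀⟩, hbot⟩ := hf
  set F : En n → EReal := fun x => ⨅ z, f z + ((L * ‖x - z‖ : ℝ) : EReal) with hF
  have lb : ∀ x z : En n, ((c x + d : ℝ) : EReal) ≤ f z + ((L * ‖x - z‖ : ℝ) : EReal) := by
    intro x z
    have hreal : c x + d ≤ (c z + d) + L * ‖x - z‖ := by
      have h1 : c x - c z ≤ ‖c‖ * ‖x - z‖ := by
        calc c x - c z = c (x - z) := by rw [map_sub]
          _ ≤ |c (x - z)| := le_abs_self _
          _ ≤ ‖c‖ * ‖x - z‖ := c.le_opNorm _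
      nlinarith [norm_nonneg (x - z), mul_le_mul_of_nonneg_right hL (norm_nonneg (x - z))]
    calc ((c x + d : ℝ) : EReal) ≤ (((c z + d) + L * ‖x - z‖ : ℝ) : EReal) :=
          EReal.coe_le_coe_iff.2 hreal
      _ = ((c z + d : ℝ) : EReal) + ((L * ‖x - z‖ : ℝ) : EReal) := by rw [EReal.coe_add]
      _ ≤ f z + ((L * ‖x - z‖ : ℝ) : EReal) := add_le_add (hcd z) le_rfl
  have lb' : ∀ x, ((c x + d : ℝ) : EReal) ≤ F x := fun x => le_iInf (lb x)
  have ub : ∀ x, F x ≤ f x₀ + ((L * ‖x - x₀‖ : ℝ) : EReal) := fun x => iInf_le _ x₀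
  have hFtop : ∀ x, F x ≠ ⊤ := fun x =>
    ((ub x).trans_lt (EReal.add_lt_top hx₀ (EReal.coe_ne_top _))).ne
  have hFbot : ∀ x, F x ≠ ⊥ := fun x =>
    fun h => (EReal.coe_ne_bot (c x + d)) (le_bot_iff.1 (h ▸ lb' x))
  set g : En n → ℝ := fun x => (F x).toReal with hg
  have hFg : ∀ x, F x = ((g x : ℝ) : EReal) := fun x =>
    (EReal.coe_toReal (hFtop x) (hFbot x)).symm
  have Flef : ∀ x, F x ≤ f x := by
    intro x
    have := iInf_le (fun z => f z + ((L * ‖x - z‖ : ℝ) : EReal)) x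
    simp at this; exact this
  have glef : ∀ x, ((g x : ℝ) : EReal) ≤ f x := fun x => (hFg x) ▸ Flef x
  have approx : ∀ (x : En n) (ε : ℝ), 0 < ε → ∃ z, f z ≠ ⊤ ∧
      (f z).toReal + L * ‖x - z‖ < g x + ε := by
    intro x ε hε
    have hlt : F x < ((g x + ε : ℝ) : EReal) := by
      rw [hFg x]; exact_mod_cast lt_add_of_pos_right _ hε
    rw [hF] at hlt
    obtain ⟨z, hz⟩ := iInf_lt_iff.1 hlt
    have hfz : f z ≠ ⊤ := by
      intro h; rw [h, EReal.top_add_coe] at hz; exact (not_top_lt hz)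
    refine ⟨z, hfz, ?_⟩
    have : f z = ((f z).toReal : EReal) := (EReal.coe_toReal hfz (hbot z)).symm
    rw [this, ← EReal.coe_add] at hz
    exact_mod_cast hz
  have gub : ∀ (x z : En n), f z ≠ ⊤ → g x ≤ (f z).toReal + L * ‖x - z‖ := by
    intro x z hz
    have h1 : F x ≤ f z + ((L * ‖x - z‖ : ℝ) : EReal) := iInf_le _ z
    have h2 : f z = ((f z).toReal : EReal) := (EReal.coe_toReal hz (hbot z)).symm
    rw [hFg x, h2, ← EReal.coe_add] at h1
    exact_mod_cast h1
  have lip1 : ∀ x y : En n, g x ≤ g y + L * ‖x - y‖ := by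
    intro x y
    refine le_of_forall_pos_le_add fun ε hε => ?_
    obtain ⟨z, hz, hz2⟩ := approx y ε hε
    have h1 : g x ≤ (f z).toReal + L * ‖x - z‖ := gub x z hz
    have h2 : ‖x - z‖ ≤ ‖y - z‖ + ‖x - y‖ := by
      calc ‖x - z‖ = ‖(x - y) + (y - z)‖ := by rw [sub_add_sub_cancel]
        _ ≤ ‖x - y‖ + ‖y - z‖ := norm_add_le _ _
        _ = ‖y - z‖ + ‖x - y‖ := by ring
    have hL0 : (0:ℝ) ≤ L := L.2
    nlinarith [mul_le_mul_of_nonneg_left h2 hL0]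
  have hlip : LipschitzWith L g := by
    apply LipschitzWith.of_dist_le_mul
    intro x y
    rw [Real.dist_eq, abs_le, dist_eq_norm]
    constructor
    · have := lip1 y x; rw [norm_sub_rev] at this; linarith
    · linarith [lip1 x y]
  have hgconv : ConvexOn ℝ univ g := by
    refine ⟨convex_univ, fun x _ y _ a b ha hb hab => ?_⟩
    have hb' : b = 1 - a := by linarith
    subst hb'
    simp only [smul_eq_mul]
    refine le_of_forall_pos_le_add fun ε hε => ?_
    obtain ⟨z₁, hz₁, hz₁'⟩ := approx x ε hε
    obtain ⟨z₂, hz₂, hz₂'⟩ := approx y ε hε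
    set w := a • z₁ + (1 - a) • z₂ with hw
    have hfw : f w ≤ ((a * (f z₁).toReal + (1 - a) * (f z₂).toReal : ℝ) : EReal) := by
      have h1 := hconv z₁ z₂ a ha (by linarith)
      have hz₁r : f z₁ = ((f z₁).toReal : EReal) := (EReal.coe_toReal hz₁ (hbot z₁)).symm
      have hz₂r : f z₂ = ((f z₂).toReal : EReal) := (EReal.coe_toReal hz₂ (hbot z₂)).symm
      calc f w ≤ (a : EReal) * f z₁ + ((1 - a : ℝ) : EReal) * f z₂ := h1
        _ = ((a * (f z₁).toReal + (1 - a) * (f z₂).toReal : ℝ) : EReal) := by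
            rw [hz₁r, hz₂r]; norm_cast
    have hfwtop : f w ≠ ⊤ := fun h => (EReal.coe_ne_top _) (top_le_iff.1 (h ▸ hfw))
    have h1 : g (a • x + (1 - a) • y) ≤ (f w).toReal + L * ‖(a • x + (1 - a) • y) - w‖ :=
      gub _ w hfwtop
    have h2 : (f w).toReal ≤ a * (f z₁).toReal + (1 - a) * (f z₂).toReal :=
      EReal.toReal_le_toReal hfw (hbot w) (EReal.coe_ne_top _) |>.trans_eq (EReal.toReal_coe _)
    have h3 : ‖(a • x + (1 - a) • y) - w‖ ≤ a * ‖x - z₁‖ + (1 - a) * ‖y - z₂‖ := by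
      have heq : (a • x + (1 - a) • y) - w = a • (x - z₁) + (1 - a) • (y - z₂) := by
        rw [hw]; module
      rw [heq]
      calc ‖a • (x - z₁) + (1 - a) • (y - z₂)‖
          ≤ ‖a • (x - z₁)‖ + ‖(1 - a) • (y - z₂)‖ := norm_add_le _ _
        _ = a * ‖x - z₁‖ + (1 - a) * ‖y - z₂‖ := by
            rw [norm_smul, norm_smul, Real.norm_eq_abs, Real.norm_eq_abs,
              abs_of_nonneg ha, abs_of_nonneg hb]
    have hL0 : (0:ℝ) ≤ L := L.2
    nlinarith [mul_le_mul_of_nonneg_left hz₁'.le ha, mul_le_mul_of_nonneg_left hz₂'.le hb,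
      mul_le_mul_of_nonneg_left h3 hL0]
  refine ⟨g, hgconv, hlip, glef, ?_⟩
  intro y hy
  refine iSup_le fun x => ?_
  set A := legendre f y with hA
  have hAbot : A ≠ ⊥ := by
    have h0 : (((inner ℝ x₀ y : ℝ) - (f x₀).toReal : ℝ) : EReal) ≤ A := by
      have : (((inner ℝ x₀ y : ℝ) - (f x₀).toReal : ℝ) : EReal)
          = ((inner ℝ x₀ y : ℝ) : EReal) - f x₀ := by
        rw [EReal.coe_sub, EReal.coe_toReal hx₀ (hbot x₀)]
      rw [hA, this]
      exact le_iSup (fun x => ((inner ℝ x y : ℝ) : EReal) - f x) x₀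
    exact fun h => (EReal.coe_ne_bot _) (le_bot_iff.1 (h ▸ h0))
  rcases eq_or_ne A ⊤ with hAtop | hAtop
  · rw [hAtop]; exact le_top
  set α := A.toReal with hα
  have hAα : A = (α : EReal) := (EReal.coe_toReal hAtop hAbot).symm
  have key : (((inner ℝ x y : ℝ) - α : ℝ) : EReal) ≤ F x := by
    refine le_iInf fun z => ?_
    rcases eq_or_ne (f z) ⊤ with hz | hz
    · rw [hz, EReal.top_add_coe]; exact le_top
    have hzr : f z = ((f z).toReal : EReal) := (EReal.coe_toReal hz (hbot z)).symm
    have h1 : ((inner ℝ z y : ℝ) : EReal) - f z ≤ A :=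
      le_iSup (fun x => ((inner ℝ x y : ℝ) : EReal) - f x) z
    have h1' : (inner ℝ z y : ℝ) - (f z).toReal ≤ α := by
      rw [hzr, ← EReal.coe_sub, hAα] at h1
      exact_mod_cast h1
    have h2 : (inner ℝ (x - z) y : ℝ) ≤ L * ‖x - z‖ := by
      calc (inner ℝ (x - z) y : ℝ) ≤ ‖x - z‖ * ‖y‖ := real_inner_le_norm _ _
        _ ≤ ‖x - z‖ * L := by nlinarith [norm_nonneg (x - z)]
        _ = L * ‖x - z‖ := mul_comm _ _
    have hreal : (inner ℝ x y : ℝ) - α ≤ (f z).toReal + L * ‖x - z‖ := by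
      have : (inner ℝ (x - z) y : ℝ) = (inner ℝ x y : ℝ) - (inner ℝ z y : ℝ) := by
        rw [inner_sub_left]
      nlinarith [h1', h2]
    calc (((inner ℝ x y : ℝ) - α : ℝ) : EReal) ≤ (((f z).toReal + L * ‖x - z‖ : ℝ) : EReal) :=
          EReal.coe_le_coe_iff.2 hreal
      _ = f z + ((L * ‖x - z‖ : ℝ) : EReal) := by rw [EReal.coe_add, ← hzr]
  have hgx : (inner ℝ x y : ℝ) - α ≤ g x := by
    have h5 := key.trans_eq (hFg x)
    exact_mod_cast h5
  rw [hAα, ← EReal.coe_sub]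
  exact EReal.coe_le_coe_iff.2 (by linarith)

/-- For any Borel measure `m` finite on compact sets and any `ν ∈ P₁(ℝⁿ)`,
the supremum defining `K(ν|m)` can be restricted to convex Lipschitz functions. -/
theorem statement5 (n : ℕ) (m : Measure (En n)) [IsFiniteMeasureOnCompacts m]
    (ν : Measure (En n)) (hν : MemP1 ν) :
    Kfun ν m =
      ⨆ (f : En n → ℝ) (_ : ConvexOn ℝ Set.univ f ∧ ∃ L : ℝ≥0, LipschitzWith L f),
        ((-(∫ x, f x ∂ν) : ℝ) : EReal)
          + elog (intExpNeg m (legendre fun x => ((f x : ℝ) : EReal))) := by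
  obtain ⟨hprob, hmom⟩ := hν
  apply le_antisymm
  · -- hard direction: Kfun ≤ sup over convex Lipschitz
    refine iSup_le fun f => iSup_le fun hP => ?_
    obtain ⟨hIsF, haetop, hint⟩ := hP
    obtain ⟨c, d, hcd⟩ := exists_affine_minorant hIsF
    set L : ℕ → ℝ≥0 := fun k => ‖c‖₊ + k with hLdef
    have hLc : ∀ k : ℕ, ‖c‖ ≤ ((L k : ℝ≥0) : ℝ) := by
      intro k
      simp only [hLdef]
      push_cast
      linarith [Nat.cast_nonneg (α := ℝ) k]
    choose g hgconv hglip hgle hgleg using fun k : ℕ =>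
      exists_lipschitz_approx hIsF c d hcd (L k) (hLc k)
    have hgint : ∀ k, Integrable (g k) ν := fun k =>
      lipschitz_integrable ⟨hprob, hmom⟩ (hglip k)
    have hI1 : ∀ k, ∫ x, g k x ∂ν ≤ ∫ x, (f x).toReal ∂ν := by
      intro k
      refine integral_mono_ae (hgint k) hint ?_
      filter_upwards [haetop] with x hx
      have h := EReal.toReal_le_toReal (hgle k x) (EReal.coe_ne_bot _) hx
      simpa using h
    set Φ : ℕ → En n → ℝ≥0∞ := fun k =>
      (Metric.closedBall (0 : En n) ((L k : ℝ≥0) : ℝ)).indicator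
        (fun y => expNeg (legendre f y)) with hΦ
    have hΦmeas : ∀ k, Measurable (Φ k) := fun k =>
      (measurable_expNeg.comp (legendre_measurable f)).indicator measurableSet_closedBall
    have hΦmono : Monotone Φ := by
      intro k k' hkk'
      refine Set.indicator_le_indicator_of_subset ?_ (fun a => zero_le)
      refine Metric.closedBall_subset_closedBall ?_
      have hL' : L k ≤ L k' := by
        simp only [hLdef]
        exact add_le_add_right (by exact_mod_cast hkk') _
      exact NNReal.coe_le_coe.2 hL'
    have hΦsup : ∀ y, (⨆ k, Φ k y) = expNeg (legendre f y) := by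
      intro y
      apply le_antisymm
      · refine iSup_le fun k => ?_
        by_cases hy : y ∈ Metric.closedBall (0 : En n) ((L k : ℝ≥0) : ℝ)
        · rw [hΦ]; simp only []; rw [Set.indicator_of_mem hy]
        · rw [hΦ]; simp only []; rw [Set.indicator_of_notMem hy]; exact zero_le
      · obtain ⟨k, hk⟩ := exists_nat_ge ‖y‖
        refine le_iSup_of_le k ?_
        rw [hΦ]; simp only []
        rw [Set.indicator_of_mem]
        · rw [Metric.mem_closedBall, dist_zero_right]
          simp only [hLdef]
          push_cast
          have : (0:ℝ) ≤ ‖c‖ := norm_nonneg _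
          linarith
    have hMCT : (⨆ k, ∫⁻ y, Φ k y ∂m) = intExpNeg m (legendre f) := by
      rw [← lintegral_iSup hΦmeas hΦmono]
      exact lintegral_congr hΦsup
    have hI2 : ∀ k, (∫⁻ y, Φ k y ∂m)
        ≤ intExpNeg m (legendre (fun x => ((g k x : ℝ) : EReal))) := by
      intro k
      refine lintegral_mono fun y => ?_
      by_cases hy : y ∈ Metric.closedBall (0 : En n) ((L k : ℝ≥0) : ℝ)
      · rw [hΦ]; simp only []; rw [Set.indicator_of_mem hy]
        refine expNeg_antitone (hgleg k y ?_)
        rwa [Metric.mem_closedBall, dist_zero_right] at hy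
      · rw [hΦ]; simp only []; rw [Set.indicator_of_notMem hy]; exact zero_le
    calc ((-(∫ x, (f x).toReal ∂ν) : ℝ) : EReal) + elog (intExpNeg m (legendre f))
        = ((-(∫ x, (f x).toReal ∂ν) : ℝ) : EReal) + ⨆ k, elog (∫⁻ y, Φ k y ∂m) := by
          rw [← hMCT, elog_iSup]
      _ = ⨆ k, (((-(∫ x, (f x).toReal ∂ν) : ℝ) : EReal) + elog (∫⁻ y, Φ k y ∂m)) :=
          ereal_add_iSup _ _
      _ ≤ ⨆ (h : En n → ℝ) (_ : ConvexOn ℝ Set.univ h ∧ ∃ L0 : ℝ≥0, LipschitzWith L0 h),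
            ((-(∫ x, h x ∂ν) : ℝ) : EReal)
              + elog (intExpNeg m (legendre fun x => ((h x : ℝ) : EReal))) := by
          refine iSup_le fun k => ?_
          refine le_iSup₂_of_le (g k) ⟨hgconv k, L k, hglip k⟩ ?_
          refine add_le_add ?_ (le_trans (elog_mono (hI2 k)) le_rfl)
          exact EReal.coe_le_coe_iff.2 (neg_le_neg (hI1 k))
  · -- easy direction
    refine iSup_le fun g => iSup_le fun hg => ?_
    obtain ⟨hgconv, Lg, hglip⟩ := hg
    haveI := hprob
    have hfE_isF : IsF (fun x => ((g x : ℝ) : EReal)) := by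
      refine ⟨?_, ?_, ⟨0, EReal.coe_ne_top _⟩, fun x => EReal.coe_ne_bot _⟩
      · exact (continuous_coe_real_ereal.comp hglip.continuous).lowerSemicontinuous
      · intro x y t ht ht1
        have h1 := hgconv.2 (mem_univ x) (mem_univ y) ht
          (by linarith : (0:ℝ) ≤ 1 - t) (by ring)
        simp only [smul_eq_mul] at h1
        calc ((g (t • x + (1 - t) • y) : ℝ) : EReal)
            ≤ ((t * g x + (1 - t) * g y : ℝ) : EReal) := EReal.coe_le_coe_iff.2 h1
          _ = (t : EReal) * ((g x : ℝ) : EReal)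
              + ((1 - t : ℝ) : EReal) * ((g y : ℝ) : EReal) := by
            rw [EReal.coe_add, EReal.coe_mul, EReal.coe_mul]
    have hint : Integrable (fun x => (((g x : ℝ) : EReal)).toReal) ν := by
      simpa [EReal.toReal_coe] using lipschitz_integrable ⟨hprob, hmom⟩ hglip
    refine le_iSup₂_of_le (fun x => ((g x : ℝ) : EReal))
      ⟨hfE_isF, Eventually.of_forall (fun x => EReal.coe_ne_top _), hint⟩ ?_
    apply le_of_eq
    have : (∫ x, g x ∂ν) = ∫ x, (((g x : ℝ) : EReal)).toReal ∂ν := by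
      simp [EReal.toReal_coe]
    rw [this]


end
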